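/- For every k ∈ {1,…,n} and every l with 2 < l ≤ n: if f_k(v_{l,η_k} + r_{l,η_k}·(1,1)) = f_k(v_{l−1,η_k} + r_{l−1,η_k}·(1,1)), then f_k(v_{l,η_k} + r_{l,η_k}·(1,1)) ≥ f_k(v_{l−2,η_k} + r_{l−2,η_k}·(1,1)) + 2. -/

import Mathlib

open Finset

/-- `Λ_{2,n}`: pairs `α ∈ ℕ²` with `1 ≤ α₁ + α₂ ≤ n`. -/
def Lam2 (n : ℕ) : Finset (ℕ × ℕ) :=
  ((range (n+1)) ×ˢ (range (n+1))).filter (fun α => 1 ≤ α.1 + α.2 ∧ α.1 + α.2 ≤ n)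

/-- `v̄ ∈ ℂ^{Λ_{2,n}}`, with `α`-coordinate `C(v₁,α₁)·C(v₂,α₂)`. -/
noncomputable def vbar (n : ℕ) (v : ℕ × ℕ) : (Lam2 n) → ℂ :=
  fun α => ((v.1.choose α.1.1 * v.2.choose α.1.2 : ℕ) : ℂ)

/-- `Λ_{3,n}`: triples `β ∈ ℕ³` with `1 ≤ β₁ + β₂ + β₃ ≤ n`. -/
def Lam3 (n : ℕ) : Finset (ℕ × ℕ × ℕ) :=
  ((range (n+1)) ×ˢ (range (n+1)) ×ˢ (range (n+1))).filter
    (fun β => 1 ≤ β.1 + β.2.1 + β.2.2 ∧ β.1 + β.2.1 + β.2.2 ≤ n)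

/-- The linear map `A_n : ℕ³ → ℕ²` with matrix rows `(1,1,n)` and `(0,1,n+1)`. -/
def Amap (n : ℕ) (β : ℕ × ℕ × ℕ) : ℕ × ℕ :=
  (β.1 + β.2.1 + n * β.2.2, β.2.1 + (n+1) * β.2.2)

/-- `c_β = Σ_{γ ≤ β} (−1)^{|β−γ|} C(β,γ) (A_nγ)‾`. -/
noncomputable def cvec (n : ℕ) (β : ℕ × ℕ × ℕ) : (Lam2 n) → ℂ :=
  ∑ γ ∈ (range (β.1+1)) ×ˢ (range (β.2.1+1)) ×ˢ (range (β.2.2+1)),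
    (((-1 : ℂ) ^ ((β.1 + β.2.1 + β.2.2) - (γ.1 + γ.2.1 + γ.2.2))) *
      ((β.1.choose γ.1 * β.2.1.choose γ.2.1 * β.2.2.choose γ.2.2 : ℕ) : ℂ)) •
      vbar n (Amap n γ)

/-- `J ∈ S_{A_n}`: `J ⊆ Λ_{3,n}`, `|J| = λ_{2,n}`, `det L^c_J ≠ 0`. -/
def memSA (n : ℕ) (J : Finset (ℕ × ℕ × ℕ)) : Prop :=
  J ⊆ Lam3 n ∧ J.card = (Lam2 n).card ∧
    ∀ e : (Lam2 n) ≃ J,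
      (Matrix.of fun i j : (Lam2 n) => cvec n (e i).1 j).det ≠ 0

/-- `m_J = Σ_{β ∈ J} A_nβ`. -/
def mJ (n : ℕ) (J : Finset (ℕ × ℕ × ℕ)) : ℕ × ℕ := ∑ β ∈ J, Amap n β

/-- `f_k(v) = k·v₁ + (1−k)·v₂`. -/
def fk (k : ℕ) (v : ℕ × ℕ) : ℤ := (k : ℤ) * v.1 + (1 - (k : ℤ)) * v.2

/-- Data of a sequence `η = (z, d₀, d₁, …, d_r)`. -/
structure OmegaData where
  r : ℕ
  z : Bool
  d : ℕ → ℕ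

/-- `η ∈ Ω`: `d₀ = 0`, `d_i ≥ 1` for `1 ≤ i ≤ r` (and `d_i = 0` beyond `r`),
and `d₀ + ⋯ + d_r = n`. -/
def OmegaData.IsOmega (n : ℕ) (η : OmegaData) : Prop :=
  η.d 0 = 0 ∧ (∀ i, 1 ≤ i → i ≤ η.r → 1 ≤ η.d i) ∧
  (∀ i, η.r < i → η.d i = 0) ∧
  (∑ i ∈ range (η.r + 1), η.d i) = n

/-- The unique `t` with `Σ_{i=0}^{t−1} d_i < j ≤ Σ_{i=0}^{t} d_i`. -/
noncomputable def tIdx (η : OmegaData) (j : ℕ) : ℕ :=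
  sInf {t | j ≤ ∑ i ∈ range (t+1), η.d i}

/-- The vector `v_{j,η} ∈ ℕ²`. -/
noncomputable def vvec (η : OmegaData) (j : ℕ) : ℕ × ℕ :=
  let t := tIdx η j
  let c := j - ∑ i ∈ range t, η.d i
  let a := (∑ i ∈ range t, if (Odd i ↔ Odd t) then η.d i else 0) + c
  if (η.z = true) ↔ Odd t then (a, 0) else (0, a)

/-- `T_{j,η}` for `1 ≤ j ≤ n`, and `T_{0,η} = {(1,1),…,(n,n)}`. -/
noncomputable def Tj (n : ℕ) (η : OmegaData) (j : ℕ) : Finset (ℕ × ℕ) :=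
  if j = 0 then (range n).image (fun q => (q+1, q+1))
  else (range (n - j + 1)).image (fun p => vvec η j + (p, p))

/-- `T_η = ⋃_{j=0}^{n} T_{j,η}`. -/
noncomputable def Tset (n : ℕ) (η : OmegaData) : Finset (ℕ × ℕ) :=
  (range (n+1)).biUnion (fun j => Tj n η j)

/-- `r_{i,η} = n·π₂(v_{i,η})`. -/
noncomputable def rshift (n : ℕ) (η : OmegaData) (i : ℕ) : ℕ := n * (vvec η i).2

/-- `T'_η = T_{0,η} ∪ ⋃_{i=1}^{n} (T_{i,η} + r_{i,η})`. -/
noncomputable def Tset' (n : ℕ) (η : OmegaData) : Finset (ℕ × ℕ) :=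
  Tj n η 0 ∪ (Finset.Icc 1 n).biUnion
    (fun i => (Tj n η i).image (fun v => v + (rshift n η i, rshift n η i)))

/-- `J_η`: the (unique) subset of `Λ_{3,n}` with `A_n(J_η) = T'_η`. -/
noncomputable def Jset (n : ℕ) (η : OmegaData) : Finset (ℕ × ℕ × ℕ) :=
  (Lam3 n).filter (fun β => Amap n β ∈ Tset' n η)

/-- `z_k = 1` iff `f_k((1,0)) ≤ f_k((n,n+1))`. -/
def zk (n k : ℕ) : Bool := decide (fk k (1, 0) ≤ fk k (n, n+1))

/-- `t_l` in the recursive definition of `η_k`, where `O`, `E` are the odd- and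
even-indexed partial sums `Σ_{j<l, j odd} d_{k,j}` and `Σ_{j<l, j even} d_{k,j}`. -/
noncomputable def tval (n k : ℕ) (l O E : ℕ) : ℕ :=
  let w := (if Odd l then E else O) + 1
  if ((zk n k = true) ↔ Odd l) then
    sSup {m : ℕ | (m : ℤ) * fk k (1, 0) ≤ fk k (w * n, w * (n+1))}
  else
    sSup {m : ℕ | (m : ℤ) * fk k (n, n+1) ≤ fk k (w, 0)}

/-- The pair `(Σ_{j≤l, j odd} d_{k,j}, Σ_{j≤l, j even} d_{k,j})` of the recursion
defining `η_k`. -/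
noncomputable def oeSums (n k : ℕ) : ℕ → ℕ × ℕ
  | 0 => (0, 0)
  | l + 1 =>
    let p := oeSums n k l
    let O := p.1
    let E := p.2
    let S := O + E
    let dnext := if S < n then
        min (n - S) (tval n k (l+1) O E - (if Odd (l+1) then O else E))
      else 0
    if Odd (l+1) then (O + dnext, E) else (O, E + dnext)

/-- `d_{k,l}`. -/
noncomputable def dk (n k : ℕ) : ℕ → ℕ
  | 0 => 0
  | l + 1 =>
    let p := oeSums n k l
    let O := p.1
    let E := p.2
    let S := O + E
    if S < n then
      min (n - S) (tval n k (l+1) O E - (if Odd (l+1) then O else E))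
    else 0

/-- `η_k = (z_k, d_{k,0}, …, d_{k,r})`, where `r` is the first index with
`Σ_{j=0}^{r} d_{k,j} = n`. -/
noncomputable def etak (n k : ℕ) : OmegaData :=
  { r := sInf {r | ∑ j ∈ range (r+1), dk n k j = n},
    z := zk n k,
    d := dk n k }

namespace Stmt18Aux

noncomputable def pw (n k : ℕ) : ℕ := if zk n k then k else (n + 1 - k)
noncomputable def qw (n k : ℕ) : ℕ := if zk n k then (n + 1 - k) else k

lemma zk_true_iff (n k : ℕ) : zk n k = true ↔ (k : ℤ) ≤ (n : ℤ) + 1 - k := by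
  simp only [zk, fk, decide_eq_true_eq]
  constructor <;> intro h <;> · simp at h ⊢; nlinarith [h]

lemma pw_le_qw (n k : ℕ) (hkn : k ≤ n) : pw n k ≤ qw n k := by
  unfold pw qw
  by_cases hz : zk n k = true
  · have := (zk_true_iff n k).1 hz
    have h2 : 2 * k ≤ n + 1 := by exact_mod_cast (by linarith : (2 * k : ℤ) ≤ (n : ℤ) + 1)
    simp [hz]; omega
  · have : ¬ ((k : ℤ) ≤ (n : ℤ) + 1 - k) := fun h => hz ((zk_true_iff n k).2 h)
    push_neg at this
    have h2 : n + 1 < 2 * k := by exact_mod_cast (by linarith : ((n : ℤ) + 1) < 2 * k)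
    simp [hz]; omega

lemma pw_pos (n k : ℕ) (hk1 : 1 ≤ k) (hkn : k ≤ n) : 1 ≤ pw n k := by
  unfold pw; split <;> omega

lemma qw_pos (n k : ℕ) (hk1 : 1 ≤ k) (hkn : k ≤ n) : 1 ≤ qw n k := by
  unfold qw; split <;> omega

lemma sSup_eq_div {a c : ℕ} (ha : 0 < a) (S : Set ℕ) (hS : ∀ m, m ∈ S ↔ m * a ≤ c) :
    sSup S = c / a := by
  have : S = Set.Iic (c / a) := by
    ext m; rw [hS]; simp [Nat.le_div_iff_mul_le ha]
  rw [this, csSup_Iic]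

lemma tval_eq (n k : ℕ) (hk1 : 1 ≤ k) (hkn : k ≤ n) (l O E : ℕ) :
    tval n k l O E =
      if Odd l then ((E + 1) * qw n k) / pw n k else ((O + 1) * pw n k) / qw n k := by
  have hk1' : (0:ℕ) < k := hk1
  have hB : 0 < n + 1 - k := by omega
  have e1 : fk k (1, 0) = (k : ℤ) := by simp [fk]
  have e2 : ∀ w : ℕ, fk k (w * n, w * (n + 1)) = ((w * (n + 1 - k) : ℕ) : ℤ) := by
    intro w
    have : ((n + 1 - k : ℕ) : ℤ) = (n : ℤ) + 1 - k := by
      push_cast [Nat.cast_sub (by omega : k ≤ n + 1)]; ring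
    simp [fk]; push_cast [this]; ring
  have e3 : ∀ w : ℕ, fk k ((w : ℕ), 0) = ((w * k : ℕ) : ℤ) := by
    intro w; simp [fk]; push_cast; ring
  by_cases hz : zk n k = true <;> by_cases hl : Odd l <;>
    simp only [tval, hz, hl, pw, qw, if_true, if_false, iff_true, iff_false, false_iff,
      true_iff, eq_self_iff_true, not_true, not_false_iff, iff_self, if_pos, if_neg,
      not_false_eq_true, Bool.false_eq_true]
  · apply sSup_eq_div hk1'
    intro m
    simp only [Set.mem_setOf_eq, e1, e2 (E + 1)]
    exact_mod_cast Iff.rfl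
  · apply sSup_eq_div hB
    intro m
    simp only [Set.mem_setOf_eq, e3 (O + 1), show fk k (n, n + 1) = ((n + 1 - k : ℕ) : ℤ) from by simpa using e2 1]
    exact_mod_cast Iff.rfl
  · apply sSup_eq_div hB
    intro m
    simp only [Set.mem_setOf_eq, e3 (E + 1), show fk k (n, n + 1) = ((n + 1 - k : ℕ) : ℤ) from by simpa using e2 1]
    exact_mod_cast Iff.rfl
  · apply sSup_eq_div hk1'
    intro m
    simp only [Set.mem_setOf_eq, e1, e2 (O + 1)]
    exact_mod_cast Iff.rfl

lemma oeSums_zero (n k : ℕ) : oeSums n k 0 = (0, 0) := rfl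

lemma oeSums_succ (n k l : ℕ) :
    oeSums n k (l + 1) =
      if Odd (l + 1) then ((oeSums n k l).1 + dk n k (l + 1), (oeSums n k l).2)
      else ((oeSums n k l).1, (oeSums n k l).2 + dk n k (l + 1)) := rfl

lemma dk_succ (n k l : ℕ) :
    dk n k (l + 1) =
      if (oeSums n k l).1 + (oeSums n k l).2 < n then
        min (n - ((oeSums n k l).1 + (oeSums n k l).2))
          (tval n k (l + 1) (oeSums n k l).1 (oeSums n k l).2 -
            (if Odd (l + 1) then (oeSums n k l).1 else (oeSums n k l).2))
      else 0 := rfl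

lemma sum_oe (n k l : ℕ) :
    (oeSums n k (l + 1)).1 + (oeSums n k (l + 1)).2 =
      (oeSums n k l).1 + (oeSums n k l).2 + dk n k (l + 1) := by
  rw [oeSums_succ]; split_ifs <;> simp <;> omega

lemma sum_dk (n k l : ℕ) :
    ∑ j ∈ range (l + 1), dk n k j = (oeSums n k l).1 + (oeSums n k l).2 := by
  induction l with
  | zero => simp [oeSums_zero, dk]
  | succ l ih => rw [Finset.sum_range_succ, ih, sum_oe]

lemma oe_inv (n k : ℕ) (hk1 : 1 ≤ k) (hkn : k ≤ n) : ∀ l : ℕ,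
    (oeSums n k l).1 + (oeSums n k l).2 ≤ n ∧
    ((oeSums n k l).1 + (oeSums n k l).2 < n →
      (if Odd (l + 1) then ((oeSums n k l).1 + 1) * pw n k ≤ ((oeSums n k l).2 + 1) * qw n k
       else ((oeSums n k l).2 + 1) * qw n k ≤ ((oeSums n k l).1 + 1) * pw n k)) := by
  have hp := pw_pos n k hk1 hkn
  have hq := qw_pos n k hk1 hkn
  intro l
  induction l with
  | zero =>
      refine ⟨by simp [oeSums_zero], ?_⟩
      intro _
      simp only [oeSums_zero]
      rw [if_pos (by decide : Odd 1)]
      simpa using pw_le_qw n k hkn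
  | succ l ih =>
      obtain ⟨h1, h2⟩ := ih
      set O := (oeSums n k l).1 with hO
      set E := (oeSums n k l).2 with hE
      by_cases hS : O + E < n
      · specialize h2 hS
        by_cases ho : Odd (l + 1)
        · -- odd step
          rw [if_pos ho] at h2
          have hOE : oeSums n k (l + 1) = (O + dk n k (l + 1), E) := by
            rw [oeSums_succ, if_pos ho]
          have hd : dk n k (l + 1) =
              min (n - (O + E)) ((E + 1) * qw n k / pw n k - O) := by
            rw [dk_succ, if_pos hS, if_pos ho, tval_eq n k hk1 hkn, if_pos ho]
          have ht : O + 1 ≤ (E + 1) * qw n k / pw n k :=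
            (Nat.le_div_iff_mul_le hp).2 h2
          constructor
          · rw [hOE]; simp only; omega
          · intro hS'
            rw [hOE] at hS' ⊢
            simp only at hS' ⊢
            have hne : ¬ Odd (l + 1 + 1) := by simp [Nat.odd_add_one, ho]
            rw [if_neg hne]
            have hdd : dk n k (l + 1) = (E + 1) * qw n k / pw n k - O := by omega
            have hlt : (E + 1) * qw n k < ((E + 1) * qw n k / pw n k + 1) * pw n k :=
              (Nat.div_lt_iff_lt_mul hp).1 (Nat.lt_succ_self _)
            have : O + dk n k (l + 1) + 1 = (E + 1) * qw n k / pw n k + 1 := by omega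
            rw [this]
            omega
        · -- even step
          rw [if_neg ho] at h2
          have hOE : oeSums n k (l + 1) = (O, E + dk n k (l + 1)) := by
            rw [oeSums_succ, if_neg ho]
          have hd : dk n k (l + 1) =
              min (n - (O + E)) ((O + 1) * pw n k / qw n k - E) := by
            rw [dk_succ, if_pos hS, if_neg ho, tval_eq n k hk1 hkn, if_neg ho]
          have ht : E + 1 ≤ (O + 1) * pw n k / qw n k :=
            (Nat.le_div_iff_mul_le hq).2 h2
          constructor
          · rw [hOE]; simp only; omega
          · intro hS'
            rw [hOE] at hS' ⊢
            simp only at hS' ⊢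
            have hoo : Odd (l + 1 + 1) := by simp [Nat.odd_add_one, ho]
            rw [if_pos hoo]
            have hdd : dk n k (l + 1) = (O + 1) * pw n k / qw n k - E := by omega
            have hlt : (O + 1) * pw n k < ((O + 1) * pw n k / qw n k + 1) * qw n k :=
              (Nat.div_lt_iff_lt_mul hq).1 (Nat.lt_succ_self _)
            have : E + dk n k (l + 1) + 1 = (O + 1) * pw n k / qw n k + 1 := by omega
            rw [this]
            omega
      · have hd0 : dk n k (l + 1) = 0 := by rw [dk_succ, if_neg hS]
        have hOE : (oeSums n k (l + 1)).1 + (oeSums n k (l + 1)).2 = O + E := by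
          rw [sum_oe, hd0, ← hO, ← hE]; omega
        refine ⟨by omega, by omega⟩

lemma dk_pos (n k : ℕ) (hk1 : 1 ≤ k) (hkn : k ≤ n) (l : ℕ)
    (hS : (oeSums n k l).1 + (oeSums n k l).2 < n) : 1 ≤ dk n k (l + 1) := by
  have hp := pw_pos n k hk1 hkn
  have hq := qw_pos n k hk1 hkn
  have h2 := (oe_inv n k hk1 hkn l).2 hS
  rw [dk_succ, if_pos hS, tval_eq n k hk1 hkn]
  by_cases ho : Odd (l + 1)
  · rw [if_pos ho] at h2 ⊢
    rw [if_pos ho]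
    have := (Nat.le_div_iff_mul_le hp).2 h2
    omega
  · rw [if_neg ho] at h2 ⊢
    rw [if_neg ho]
    have := (Nat.le_div_iff_mul_le hq).2 h2
    omega

lemma oeSums_reach (n k : ℕ) (hk1 : 1 ≤ k) (hkn : k ≤ n) :
    (oeSums n k n).1 + (oeSums n k n).2 = n := by
  have key : ∀ l, min l n ≤ (oeSums n k l).1 + (oeSums n k l).2 := by
    intro l
    induction l with
    | zero => simp
    | succ l ih =>
        by_cases hS : (oeSums n k l).1 + (oeSums n k l).2 < n
        · have := dk_pos n k hk1 hkn l hS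
          have := sum_oe n k l
          omega
        · have h1 := (oe_inv n k hk1 hkn l).1
          have := sum_oe n k l
          omega
  have := key n
  have := (oe_inv n k hk1 hkn n).1
  omega

lemma etak_sum (n k : ℕ) (hk1 : 1 ≤ k) (hkn : k ≤ n) :
    ∑ j ∈ range ((etak n k).r + 1), dk n k j = n :=
  Nat.sInf_mem (⟨n, by rw [Set.mem_setOf_eq, sum_dk]; exact oeSums_reach n k hk1 hkn⟩ :
    Set.Nonempty {r | ∑ j ∈ range (r + 1), dk n k j = n})

lemma tIdx_le_sum (n k : ℕ) (hk1 : 1 ≤ k) (hkn : k ≤ n) (j : ℕ) (hjn : j ≤ n) :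
    j ≤ ∑ i ∈ range (tIdx (etak n k) j + 1), dk n k i := by
  have hmem : (etak n k).r ∈ {t | j ≤ ∑ i ∈ range (t + 1), (etak n k).d i} := by
    show j ≤ ∑ i ∈ range ((etak n k).r + 1), dk n k i
    rw [etak_sum n k hk1 hkn]
    exact hjn
  exact Nat.sInf_mem ⟨_, hmem⟩

lemma sum_lt_tIdx (n k : ℕ) (hk1 : 1 ≤ k) (hkn : k ≤ n) (j : ℕ) (hj1 : 1 ≤ j) (hjn : j ≤ n) :
    ∑ i ∈ range (tIdx (etak n k) j), dk n k i < j := by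
  rcases Nat.eq_zero_or_pos (tIdx (etak n k) j) with h | h
  · rw [h]; simp; omega
  · by_contra hc
    push_neg at hc
    have hmem : (tIdx (etak n k) j - 1) ∈ {t | j ≤ ∑ i ∈ range (t + 1), (etak n k).d i} := by
      rw [Set.mem_setOf_eq, show tIdx (etak n k) j - 1 + 1 = tIdx (etak n k) j from by omega]
      exact hc
    have hle : tIdx (etak n k) j ≤ tIdx (etak n k) j - 1 := Nat.sInf_le hmem
    omega

lemma tIdx_mono (n k : ℕ) (hk1 : 1 ≤ k) (hkn : k ≤ n) {j j' : ℕ} (hjj : j ≤ j')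
    (hj'n : j' ≤ n) : tIdx (etak n k) j ≤ tIdx (etak n k) j' :=
  Nat.sInf_le (by
    rw [Set.mem_setOf_eq]
    exact le_trans hjj (tIdx_le_sum n k hk1 hkn j' hj'n))

noncomputable def aval (η : OmegaData) (j : ℕ) : ℕ :=
  (∑ i ∈ range (tIdx η j), if (Odd i ↔ Odd (tIdx η j)) then η.d i else 0) +
    (j - ∑ i ∈ range (tIdx η j), η.d i)

noncomputable def wt (n k : ℕ) (η : OmegaData) (j : ℕ) : ℕ :=
  if (η.z = true) ↔ Odd (tIdx η j) then k else n + 1 - k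

lemma vvec_eq (η : OmegaData) (j : ℕ) :
    vvec η j = if (η.z = true) ↔ Odd (tIdx η j) then (aval η j, 0) else (0, aval η j) := rfl

lemma g_eval (n k : ℕ) (hkn : k ≤ n) (η : OmegaData) (j : ℕ) :
    fk k (vvec η j + (rshift n η j, rshift n η j)) = (wt n k η j : ℤ) * (aval η j : ℤ) := by
  by_cases h : (η.z = true) ↔ Odd (tIdx η j)
  · simp [rshift, vvec_eq, wt, if_pos h, fk, Prod.mk_add_mk]
  · simp only [rshift, vvec_eq, wt, if_neg h, fk, Prod.mk_add_mk]
    simp only [Prod.snd, Prod.fst, zero_add]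
    push_cast [Nat.cast_sub (show k ≤ n + 1 by omega)]
    ring

lemma aval_lt (n k : ℕ) (hk1 : 1 ≤ k) (hkn : k ≤ n) {j j' : ℕ}
    (hj1 : 1 ≤ j) (hjj : j < j') (hj'n : j' ≤ n)
    (hpar : Odd (tIdx (etak n k) j) ↔ Odd (tIdx (etak n k) j')) :
    aval (etak n k) j < aval (etak n k) j' := by
  have hd : (etak n k).d = dk n k := rfl
  have hTT : tIdx (etak n k) j ≤ tIdx (etak n k) j' :=
    tIdx_mono n k hk1 hkn (le_of_lt hjj) hj'n
  have hjle := tIdx_le_sum n k hk1 hkn j (by omega)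
  have hjlt := sum_lt_tIdx n k hk1 hkn j hj1 (by omega)
  have hj'le := tIdx_le_sum n k hk1 hkn j' hj'n
  have hj'lt := sum_lt_tIdx n k hk1 hkn j' (by omega) hj'n
  unfold aval
  rw [hd]
  set T := tIdx (etak n k) j with hT
  set T' := tIdx (etak n k) j' with hT'
  rcases eq_or_lt_of_le hTT with he | hlt
  · rw [← he] at hj'lt ⊢
    omega
  · simp only [hpar]
    have hB : (∑ i ∈ range (T + 1), if Odd i ↔ Odd T' then dk n k i else 0)
        = (∑ i ∈ range T, if Odd i ↔ Odd T' then dk n k i else 0) + dk n k T := by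
      rw [Finset.sum_range_succ, if_pos hpar]
    have hBC : (∑ i ∈ range (T + 1), if Odd i ↔ Odd T' then dk n k i else 0)
        ≤ ∑ i ∈ range T', if Odd i ↔ Odd T' then dk n k i else 0 := by
      apply Finset.sum_le_sum_of_subset
      exact Finset.range_subset_range.mpr (by omega)
    have hPs : ∑ i ∈ range (T + 1), dk n k i = (∑ i ∈ range T, dk n k i) + dk n k T :=
      Finset.sum_range_succ _ _
    omega

lemma g_gap (n k : ℕ) (hk1 : 1 ≤ k) (hkn : k ≤ n) {j j' : ℕ}
    (hj1 : 1 ≤ j) (hjj : j < j') (hj'n : j' ≤ n)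
    (hpar : Odd (tIdx (etak n k) j) ↔ Odd (tIdx (etak n k) j')) :
    fk k (vvec (etak n k) j + (rshift n (etak n k) j, rshift n (etak n k) j)) +
      (wt n k (etak n k) j : ℤ) ≤
    fk k (vvec (etak n k) j' + (rshift n (etak n k) j', rshift n (etak n k) j')) := by
  rw [g_eval n k hkn, g_eval n k hkn]
  have hw : wt n k (etak n k) j = wt n k (etak n k) j' := by
    unfold wt
    by_cases hz : ((etak n k).z = true) ↔ Odd (tIdx (etak n k) j)
    · rw [if_pos hz, if_pos (by tauto)]
    · rw [if_neg hz, if_neg (by tauto)]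
  rw [hw]
  have ha : (aval (etak n k) j : ℤ) + 1 ≤ (aval (etak n k) j' : ℤ) := by
    exact_mod_cast aval_lt n k hk1 hkn hj1 hjj hj'n hpar
  have hw0 : (0:ℤ) ≤ (wt n k (etak n k) j' : ℤ) := by positivity
  nlinarith [hw0, ha]

lemma wt_pos (n k : ℕ) (η : OmegaData) (j : ℕ) (hk1 : 1 ≤ k) (hkn : k ≤ n) :
    1 ≤ wt n k η j := by unfold wt; split <;> omega

lemma wt_two (n k : ℕ) (η : OmegaData) (j : ℕ) (hk2 : 2 ≤ k) (hkn : k + 1 ≤ n) :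
    2 ≤ wt n k η j := by unfold wt; split <;> omega

lemma tIdx_eq_one (n k : ℕ) (h1 : dk n k 1 = n) {j : ℕ} (hj1 : 1 ≤ j) (hjn : j ≤ n) :
    tIdx (etak n k) j = 1 := by
  have hsum2 : ∑ i ∈ range 2, dk n k i = n := by
    rw [Finset.sum_range_succ, Finset.sum_range_one, show dk n k 0 = 0 from rfl, h1]
    omega
  have hmem : (1 : ℕ) ∈ {t | j ≤ ∑ i ∈ range (t + 1), (etak n k).d i} := by
    show j ≤ ∑ i ∈ range 2, dk n k i
    omega
  have hle : tIdx (etak n k) j ≤ 1 := Nat.sInf_le hmem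
  have hmem0 : tIdx (etak n k) j ∈ {t | j ≤ ∑ i ∈ range (t + 1), (etak n k).d i} :=
    Nat.sInf_mem ⟨1, hmem⟩
  rcases Nat.le_one_iff_eq_zero_or_eq_one.mp hle with h0 | h1'
  · exfalso
    simp only [Set.mem_setOf_eq, h0, zero_add, Finset.sum_range_one,
      show (etak n k).d 0 = 0 from rfl] at hmem0
    omega
  · exact h1'

lemma dk_one (n k : ℕ) (hn2 : 2 ≤ n) (hk : k = 1 ∨ k = n) : dk n k 1 = n := by
  have hk1 : 1 ≤ k := by rcases hk with h | h <;> omega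
  have hkn : k ≤ n := by rcases hk with h | h <;> omega
  have e : dk n k 1 = min n (tval n k 1 0 0) := by
    have h := dk_succ n k 0
    rw [oeSums_zero] at h
    simpa [show (0:ℕ) < n by omega] using h
  rw [e, tval_eq n k hk1 hkn, if_pos (by decide : Odd 1)]
  have hpq : pw n k = 1 ∧ qw n k = n := by
    rcases hk with h | h
    · have hz : zk n 1 = true := (zk_true_iff n 1).2 (by push_cast; omega)
      rw [h]
      exact ⟨by simp [pw, hz], by simp [qw, hz]⟩
    · have hz : zk n n = false := by
        rw [← Bool.not_eq_true]
        intro hcon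
        have := (zk_true_iff n n).1 hcon
        omega
      rw [h]
      refine ⟨?_, ?_⟩
      · simp only [pw, hz, Bool.false_eq_true, if_false]
        omega
      · simp only [qw, hz, Bool.false_eq_true, if_false]
  rw [hpq.1, hpq.2]
  simp

end Stmt18Aux
theorem stmt18 (n : ℕ) (hn : 1 ≤ n) (k : ℕ) (hk1 : 1 ≤ k) (hkn : k ≤ n)
    (l : ℕ) (hl : 2 < l) (hln : l ≤ n)
    (heq : fk k (vvec (etak n k) l + (rshift n (etak n k) l, rshift n (etak n k) l)) =
      fk k (vvec (etak n k) (l-1) + (rshift n (etak n k) (l-1), rshift n (etak n k) (l-1)))) :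
    fk k (vvec (etak n k) (l-2) + (rshift n (etak n k) (l-2), rshift n (etak n k) (l-2))) + 2 ≤
    fk k (vvec (etak n k) l + (rshift n (etak n k) l, rshift n (etak n k) l)) := by
  open Stmt18Aux in
  have hn3 : 3 ≤ n := by omega
  have hgl1 := g_eval n k hkn (etak n k) (l - 1)
  have hgl := g_eval n k hkn (etak n k) l
  have hgl2 := g_eval n k hkn (etak n k) (l - 2)
  have hne : ¬ (Odd (tIdx (etak n k) (l - 1)) ↔ Odd (tIdx (etak n k) l)) := by
    intro hpar
    have hg := g_gap n k hk1 hkn (show 1 ≤ l - 1 by omega) (show l - 1 < l by omega) hln hpar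
    have hw := wt_pos n k (etak n k) (l - 1) hk1 hkn
    have hw' : (1 : ℤ) ≤ (wt n k (etak n k) (l - 1) : ℤ) := by exact_mod_cast hw
    linarith [hg, heq.le, heq.ge]
  by_cases hk : k = 1 ∨ k = n
  · exfalso
    have hd1 : dk n k 1 = n := dk_one n k (by omega) hk
    have t1 : tIdx (etak n k) l = 1 := tIdx_eq_one n k hd1 (by omega) hln
    have t2 : tIdx (etak n k) (l - 1) = 1 := tIdx_eq_one n k hd1 (by omega) (by omega)
    exact hne (by rw [t1, t2])
  · push_neg at hk
    have hk2 : 2 ≤ k := by omega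
    have hkn1 : k + 1 ≤ n := by omega
    by_cases hp : Odd (tIdx (etak n k) (l - 2)) ↔ Odd (tIdx (etak n k) (l - 1))
    · have hg := g_gap n k hk1 hkn (show 1 ≤ l - 2 by omega) (show l - 2 < l - 1 by omega)
        (show l - 1 ≤ n by omega) hp
      have hw := wt_two n k (etak n k) (l - 2) hk2 hkn1
      have hw' : (2 : ℤ) ≤ (wt n k (etak n k) (l - 2) : ℤ) := by exact_mod_cast hw
      linarith [hg, heq.le, heq.ge]
    · have hp' : Odd (tIdx (etak n k) (l - 2)) ↔ Odd (tIdx (etak n k) l) := by tauto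
      have hg := g_gap n k hk1 hkn (show 1 ≤ l - 2 by omega) (show l - 2 < l by omega) hln hp'
      have hw := wt_two n k (etak n k) (l - 2) hk2 hkn1
      have hw' : (2 : ℤ) ≤ (wt n k (etak n k) (l - 2) : ℤ) := by exact_mod_cast hw
      linarith [hg]
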